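/- Let A be an m×n real matrix, Ṽ ∈ ℝ^{n×r} and Ũ ∈ ℝ^{m×r} orthonormal (ℓ = 0) with orthogonal completions Q₁ = [Ũ, Ũ⊥], Q₂ = [Ṽ, Ṽ⊥], and set Ā = Q₁*AQ₂ with conformal blocks Ā₁₁ (r×r), Ā₁₂, Ā₂₁, Ā₂₂. If Ā₁₁ is invertible, then Q₁*(A − AṼ(Ũ*AṼ)†Ũ*A)Q₂ = [[0, 0],[0, Ā₂₂ − Ā₂₁Ā₁₁^{−1}Ā₁₂]]; i.e., without oversampling the generalized Nyström error, up to orthogonal transformations, is nonzero only in the (2,2) block, where it equals the Schur complement of Ā₁₁ in Ā. -/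

import Mathlib

open Matrix

/-- The tuple `f` sorted in nonincreasing order. -/
noncomputable def sortedDesc {α : Type*} [Fintype α] (f : α → ℝ) :
    Fin (Fintype.card α) → ℝ := fun i =>
  let g : Fin (Fintype.card α) → ℝ := f ∘ (Fintype.equivFin α).symm
  g (Tuple.sort g i.rev)

/-- Singular values of a real matrix, in nonincreasing order (generic index types). -/
noncomputable def sVals {m n : Type*} [Fintype m] [Fintype n] [DecidableEq n]
    (M : Matrix m n ℝ) : Fin (Fintype.card n) → ℝ :=
  sortedDesc fun j => Real.sqrt ((show (Mᵀ * M).IsHermitian by simpa using Matrix.isHermitian_conjTranspose_mul_self M).eigenvalues j)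

/-- Singular values of a real `Fin m × Fin n` matrix, in nonincreasing order,
`singularValues M 0` being the largest. -/
noncomputable def singularValues {m n : ℕ} (M : Matrix (Fin m) (Fin n) ℝ) :
    Fin n → ℝ := fun i =>
  let g : Fin n → ℝ := fun j =>
    Real.sqrt ((show (Mᵀ * M).IsHermitian by simpa using Matrix.isHermitian_conjTranspose_mul_self M).eigenvalues j)
  g (Tuple.sort g i.rev)

/-- The spectral (operator 2-)norm of a real matrix. -/
noncomputable def specNorm {m n : Type*} [Fintype m] [Fintype n] [DecidableEq n]
    (M : Matrix m n ℝ) : ℝ :=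
  ‖LinearMap.toContinuousLinearMap (Matrix.toEuclideanLin M)‖

/-- The Moore-Penrose pseudoinverse of a real matrix, defined via the Tikhonov
regularization limit of `(AᵀA + εI)⁻¹Aᵀ` as `ε` tends to `0` from above. -/
noncomputable def pinv {m n : Type*} [Fintype m] [Fintype n] [DecidableEq n]
    (A : Matrix m n ℝ) : Matrix n m ℝ :=
  Filter.limUnder (nhdsWithin 0 (Set.Ioi 0)) fun ε : ℝ => (Aᵀ * A + ε • 1)⁻¹ * Aᵀ


lemma pinv_of_isUnit {k : Type*} [Fintype k] [DecidableEq k] (A : Matrix k k ℝ)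
    (h : IsUnit A) : pinv A = A⁻¹ := by
  have hdet : IsUnit A.det := (Matrix.isUnit_iff_isUnit_det A).mp h
  have hdetT : IsUnit Aᵀ.det := by rwa [Matrix.det_transpose]
  have hdet2 : (Aᵀ * A).det ≠ 0 := by
    rw [Matrix.det_mul, Matrix.det_transpose]
    exact mul_ne_zero hdet.ne_zero hdet.ne_zero
  have hc : ContinuousAt (fun ε : ℝ => (Aᵀ * A + ε • 1)⁻¹ * Aᵀ) 0 := by
    have hM : Continuous (fun ε : ℝ => Aᵀ * A + ε • 1) := by continuity
    refine ContinuousAt.mul ?_ continuousAt_const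
    refine ContinuousAt.comp ?_ hM.continuousAt
    refine continuousAt_matrix_inv _ ?_
    rw [Ring.inverse_eq_inv']
    apply continuousAt_inv₀
    simpa using hdet2
  have ht : Filter.Tendsto (fun ε : ℝ => (Aᵀ * A + ε • 1)⁻¹ * Aᵀ)
      (nhdsWithin 0 (Set.Ioi 0)) (nhds ((Aᵀ * A + (0:ℝ) • 1)⁻¹ * Aᵀ)) :=
    (hc.tendsto).mono_left nhdsWithin_le_nhds
  have := ht.limUnder_eq
  rw [pinv, this, zero_smul, add_zero, Matrix.mul_inv_rev,
    Matrix.mul_assoc, Matrix.nonsing_inv_mul _ hdetT, Matrix.mul_one]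

/-- Without oversampling (`ℓ = 0`) and with `Ā₁₁` invertible, the generalized
Nyström error, up to orthogonal transformations, is nonzero only in the `(2,2)`
block, where it equals the Schur complement `Ā₂₂ − Ā₂₁Ā₁₁⁻¹Ā₁₂`. -/
theorem generalized_nystrom_error_structure_no_oversampling
    (m n r : ℕ) (hrn : r ≤ n) (hrm : r ≤ m)
    (A : Matrix (Fin m) (Fin n) ℝ)
    (tV : Matrix (Fin n) (Fin r) ℝ) (tU : Matrix (Fin m) (Fin r) ℝ)
    (tVperp : Matrix (Fin n) (Fin (n - r)) ℝ)
    (tUperp : Matrix (Fin m) (Fin (m - r)) ℝ)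
    (hV : tVᵀ * tV = 1) (hU : tUᵀ * tU = 1)
    (Q₁ : Matrix (Fin m) (Fin r ⊕ Fin (m - r)) ℝ)
    (Q₂ : Matrix (Fin n) (Fin r ⊕ Fin (n - r)) ℝ)
    (hQ₁ : Q₁ = Matrix.fromCols tU tUperp)
    (hQ₂ : Q₂ = Matrix.fromCols tV tVperp)
    (hQ₁o : Q₁ᵀ * Q₁ = 1) (hQ₁o' : Q₁ * Q₁ᵀ = 1)
    (hQ₂o : Q₂ᵀ * Q₂ = 1) (hQ₂o' : Q₂ * Q₂ᵀ = 1)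
    (Abar : Matrix (Fin r ⊕ Fin (m - r)) (Fin r ⊕ Fin (n - r)) ℝ)
    (hAbar : Abar = Q₁ᵀ * A * Q₂)
    (A₁₁ : Matrix (Fin r) (Fin r) ℝ) (hA₁₁ : A₁₁ = Abar.toBlocks₁₁)
    (A₁₂ : Matrix (Fin r) (Fin (n - r)) ℝ) (hA₁₂ : A₁₂ = Abar.toBlocks₁₂)
    (A₂₁ : Matrix (Fin (m - r)) (Fin r) ℝ) (hA₂₁ : A₂₁ = Abar.toBlocks₂₁)
    (A₂₂ : Matrix (Fin (m - r)) (Fin (n - r)) ℝ) (hA₂₂ : A₂₂ = Abar.toBlocks₂₂)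
    (hinv : IsUnit A₁₁) :
    Q₁ᵀ * (A - A * tV * pinv (tUᵀ * A * tV) * (tUᵀ * A)) * Q₂ =
      Matrix.fromBlocks 0 0 0 (A₂₂ - A₂₁ * A₁₁⁻¹ * A₁₂) := by
  have hdet : IsUnit A₁₁.det := (Matrix.isUnit_iff_isUnit_det A₁₁).mp hinv
  set J₁ : Matrix (Fin r ⊕ Fin (m - r)) (Fin r) ℝ := Matrix.fromRows 1 0 with hJ₁
  set J₂ : Matrix (Fin r ⊕ Fin (n - r)) (Fin r) ℝ := Matrix.fromRows 1 0 with hJ₂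
  have htV : tV = Q₂ * J₂ := by
    rw [hQ₂, hJ₂, Matrix.fromCols_mul_fromRows]; simp
  have htU : tU = Q₁ * J₁ := by
    rw [hQ₁, hJ₁, Matrix.fromCols_mul_fromRows]; simp
  have hAb : Abar = Matrix.fromBlocks A₁₁ A₁₂ A₂₁ A₂₂ := by
    rw [hA₁₁, hA₁₂, hA₂₁, hA₂₂, Matrix.fromBlocks_toBlocks]
  have hAtV : A * tV = A * Q₂ * J₂ := by rw [htV, Matrix.mul_assoc]
  have htUA : tUᵀ * A = J₁ᵀ * (Q₁ᵀ * A) := by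
    rw [htU, Matrix.transpose_mul, Matrix.mul_assoc]
  have hJ₁T : J₁ᵀ = Matrix.fromCols 1 0 := by
    rw [hJ₁, Matrix.transpose_fromRows]; simp
  have hJ₁Abar : J₁ᵀ * Abar = Matrix.fromCols A₁₁ A₁₂ := by
    rw [hJ₁T, hAb, Matrix.fromCols_mul_fromBlocks]; simp
  have hAbarJ₂ : Abar * J₂ = Matrix.fromRows A₁₁ A₂₁ := by
    rw [hJ₂, hAb, Matrix.fromBlocks_mul_fromRows]; simp
  have hmid : tUᵀ * A * tV = A₁₁ := by
    have : tUᵀ * A * tV = J₁ᵀ * Abar * J₂ := by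
      rw [htUA, htV, hAbar]; simp [Matrix.mul_assoc]
    rw [this, Matrix.mul_assoc, hAbarJ₂, hJ₁T, Matrix.fromCols_mul_fromRows]
    simp
  rw [hmid, pinv_of_isUnit _ hinv]
  have key : Q₁ᵀ * (A - A * tV * A₁₁⁻¹ * (tUᵀ * A)) * Q₂ =
      Abar - (Abar * J₂) * A₁₁⁻¹ * (J₁ᵀ * Abar) := by
    rw [htUA, hAtV, hAbar]; simp [Matrix.sub_mul, Matrix.mul_sub, Matrix.mul_assoc]
  rw [key, hAbarJ₂, hJ₁Abar, hAb, Matrix.fromRows_mul, Matrix.fromRows_mul_fromCols,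
    Matrix.mul_nonsing_inv _ hdet]
  ext (i | i) (j | j) <;>
    simp [Matrix.fromBlocks, Matrix.mul_assoc, Matrix.nonsing_inv_mul _ hdet,
      Matrix.nonsing_inv_mul_cancel_left _ _ hdet]
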